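/- Let Ω be a metric space with Borel σ-algebra 𝓕, B_b the space of bounded Borel measurable functions f : Ω → ℝ, C_b the space of bounded continuous functions, and U_b the space of bounded upper semicontinuous functions. Let φ : B_b → ℝ be a positive linear functional satisfying condition (C), and let μ ∈ ca⁺_r(𝓕) be the regular finite measure with φ(f) = ⟨f,μ⟩ for all f ∈ C_b. Then φ(f) ≤ ⟨f,μ⟩ for all f ∈ U_b and φ_r(f) ≤ ⟨f,μ⟩ for all f ∈ B_b, where φ_r(f) := sup{φ(g) : g ∈ U_b, g ≤ f}; and both inequalities are equalities if φ*_{C_b}(ν) = φ*_{U_b}(ν) for all ν ∈ ca⁺_r(𝓕). In particular, if in addition φ is lower regular (φ = φ_r), then φ(f) = ⟨f,μ⟩ for all f ∈ B_b. -/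

import Mathlib

open MeasureTheory Filter Topology Set
open scoped NNReal ENNReal

variable {Ω : Type*} [MetricSpace Ω] [MeasurableSpace Ω] [BorelSpace Ω]

/-- Bounded Borel measurable real-valued functions. -/
def Bb (Ω : Type*) [TopologicalSpace Ω] [MeasurableSpace Ω] : Set (Ω → ℝ) :=
  {f | Measurable f ∧ ∃ M : ℝ, ∀ ω, |f ω| ≤ M}

/-- Bounded continuous real-valued functions. -/
def Cb (Ω : Type*) [TopologicalSpace Ω] : Set (Ω → ℝ) :=
  {f | Continuous f ∧ ∃ M : ℝ, ∀ ω, |f ω| ≤ M}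

/-- Bounded upper semicontinuous real-valued functions. -/
def Ub (Ω : Type*) [TopologicalSpace Ω] : Set (Ω → ℝ) :=
  {f | UpperSemicontinuous f ∧ ∃ M : ℝ, ∀ ω, |f ω| ≤ M}

/-- ca⁺_r(𝓕): regular finite measures on the Borel σ-algebra. -/
def caReg (Ω : Type*) [TopologicalSpace Ω] [MeasurableSpace Ω] : Set (Measure Ω) :=
  {μ | IsFiniteMeasure μ ∧ ∀ A : Set Ω, MeasurableSet A →
    μ A = ⨆ B ∈ {B : Set Ω | MeasurableSet B ∧ IsClosed B ∧ IsCompact B ∧ B ⊆ A}, μ B}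

/-- Condition (C) for a real-valued functional on B_b. -/
def CondCR (φ : (Ω → ℝ) → ℝ) : Prop :=
  ∃ K : ℕ → Set Ω, (∀ n, IsCompact (K n)) ∧ (∀ n, K n ⊆ K (n + 1)) ∧
    ∀ (fn : ℕ → Ω → ℝ) (f : Ω → ℝ), (∀ n, fn n ∈ Bb Ω) → f ∈ Bb Ω →
      (∀ n ω, fn n ω ≤ fn (n + 1) ω) →
      (∀ m n, m ≤ n → ∀ ω ∈ K m, fn n ω = f ω) →
      (Monotone fun n => φ (fn n)) ∧ Tendsto (fun n => φ (fn n)) atTop (𝓝 (φ f))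

/-- The lower regularization φ_r of a real-valued φ. -/
noncomputable def lowerRegR (φ : (Ω → ℝ) → ℝ) (f : Ω → ℝ) : ℝ :=
  sSup (φ '' {g | g ∈ Ub Ω ∧ ∀ ω, g ω ≤ f ω})

/-- The conjugate of a real-valued φ over a class S of functions. -/
noncomputable def conjOnR (S : Set (Ω → ℝ)) (φ : (Ω → ℝ) → ℝ) (ν : Measure Ω) : EReal :=
  ⨆ f ∈ S, ((∫ ω, f ω ∂ν : ℝ) : EReal) - ((φ f : ℝ) : EReal)

/-! ### Auxiliary lemmas -/

/-- A bounded upper semicontinuous function on a nonempty metric space is the pointwise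
limit of a sequence of (Lipschitz) continuous functions lying above it, uniformly bounded. -/
lemma usc_approx_seq [Nonempty Ω] {f : Ω → ℝ} {M : ℝ}
    (hf : UpperSemicontinuous f) (hM : ∀ ω, |f ω| ≤ M) :
    ∃ G : ℕ → Ω → ℝ, (∀ n, Continuous (G n)) ∧ (∀ n ω, |G n ω| ≤ M) ∧
      (∀ n ω, f ω ≤ G n ω) ∧ (∀ ω, Tendsto (fun n => G n ω) atTop (𝓝 (f ω))) := by
  set G : ℕ → Ω → ℝ := fun n x => ⨆ y, (f y - n * dist x y) with hG
  have bdd : ∀ (n : ℕ) (x : Ω), BddAbove (range fun y => f y - n * dist x y) := by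
    intro n x
    refine ⟨M, ?_⟩
    rintro _ ⟨y, rfl⟩
    have h1 := (abs_le.1 (hM y)).2
    have h2 : (0:ℝ) ≤ (n:ℝ) * dist x y := by positivity
    dsimp only; linarith
  have hfG : ∀ (n : ℕ) (x : Ω), f x ≤ G n x := by
    intro n x
    refine le_ciSup_of_le (bdd n x) x ?_
    simp
  have hGM : ∀ (n : ℕ) (x : Ω), G n x ≤ M := by
    intro n x
    refine ciSup_le fun y => ?_
    have h1 := (abs_le.1 (hM y)).2
    have h2 : (0:ℝ) ≤ (n:ℝ) * dist x y := by positivity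
    linarith
  have habs : ∀ (n : ℕ) (x : Ω), |G n x| ≤ M := by
    intro n x
    rw [abs_le]
    refine ⟨?_, hGM n x⟩
    have h1 := (abs_le.1 (hM x)).1
    linarith [hfG n x]
  have hlip : ∀ (n : ℕ) (x x' : Ω), G n x ≤ G n x' + n * dist x x' := by
    intro n x x'
    refine ciSup_le fun y => ?_
    have htri : dist x' y ≤ dist x' x + dist x y := dist_triangle x' x y
    have : f y - n * dist x y ≤ (f y - n * dist x' y) + n * dist x x' := by
      have : (n:ℝ) * dist x' y ≤ n * dist x' x + n * dist x y := by
        have := mul_le_mul_of_nonneg_left htri (by positivity : (0:ℝ) ≤ (n:ℝ))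
        linarith [this]
      rw [dist_comm x' x] at this
      linarith
    exact this.trans (add_le_add_left (le_ciSup_of_le (bdd n x') y le_rfl) _)
  have hcont : ∀ n : ℕ, Continuous (G n) := by
    intro n
    have hL : LipschitzWith (n : ℝ≥0) (G n) := by
      apply LipschitzWith.of_dist_le_mul
      intro x x'
      rw [Real.dist_eq, abs_le, NNReal.coe_natCast]
      constructor
      · have := hlip n x' x; rw [dist_comm x' x] at this; linarith
      · have := hlip n x x'; linarith
    exact hL.continuous
  have hanti : ∀ x : Ω, Antitone fun n => G n x := by
    intro x
    refine antitone_nat_of_succ_le fun n => ?_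
    refine ciSup_le fun y => le_ciSup_of_le (bdd n x) y ?_
    have : (n:ℝ) * dist x y ≤ ((n:ℕ)+1:ℝ) * dist x y := by
      have := dist_nonneg (x := x) (y := y); nlinarith
    push_cast at this ⊢
    linarith
  refine ⟨G, hcont, habs, hfG, fun x => ?_⟩
  have hbb : BddBelow (range fun n => G n x) := ⟨f x, by rintro _ ⟨n, rfl⟩; exact hfG n x⟩
  have htend := tendsto_atTop_ciInf (hanti x) hbb
  have hinf : ⨅ n, G n x = f x := by
    refine le_antisymm ?_ (le_ciInf fun n => hfG n x)
    refine le_of_forall_pos_le_add fun ε hε => ?_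
    have := hf x (f x + ε) (by linarith)
    rw [Metric.eventually_nhds_iff] at this
    obtain ⟨δ, hδ, hball⟩ := this
    obtain ⟨n, hn⟩ := exists_nat_ge ((M - f x - ε) / δ)
    refine ciInf_le_of_le hbb n (ciSup_le fun y => ?_)
    by_cases hy : dist y x < δ
    · have := (hball hy).le
      have h2 : (0:ℝ) ≤ (n:ℝ) * dist x y := by positivity
      linarith
    · push_neg at hy
      have h1 := (abs_le.1 (hM y)).2
      have h2 : (M - f x - ε) ≤ n * δ := by
        rw [div_le_iff₀ hδ] at hn; linarith
      have h3 : (n:ℝ) * δ ≤ n * dist x y := by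
        rw [dist_comm x y]; exact mul_le_mul_of_nonneg_left hy (by positivity)
      linarith
  rw [← hinf]
  exact htend

lemma mem_Bb_of_Cb {f : Ω → ℝ} (hf : f ∈ Cb Ω) : f ∈ Bb Ω := ⟨hf.1.measurable, hf.2⟩

lemma mem_Bb_of_Ub {f : Ω → ℝ} (hf : f ∈ Ub Ω) : f ∈ Bb Ω := ⟨hf.1.measurable, hf.2⟩

lemma zero_mem_Bb : (0 : Ω → ℝ) ∈ Bb Ω := ⟨measurable_const, 0, by simp⟩

lemma zero_mem_Cb : (0 : Ω → ℝ) ∈ Cb Ω := ⟨continuous_const, 0, by simp⟩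

lemma sub_mem_Bb {f g : Ω → ℝ} (hf : f ∈ Bb Ω) (hg : g ∈ Bb Ω) : f - g ∈ Bb Ω := by
  obtain ⟨Mf, hMf⟩ := hf.2
  obtain ⟨Mg, hMg⟩ := hg.2
  refine ⟨hf.1.sub hg.1, Mf + Mg, fun ω => ?_⟩
  have h1 : |f ω - g ω| ≤ |f ω| + |g ω| := abs_sub _ _
  have := hMf ω; have := hMg ω
  simp only [Pi.sub_apply]
  linarith

lemma phi_zero (φ : (Ω → ℝ) → ℝ)
    (hsmul : ∀ c : ℝ, ∀ f ∈ Bb Ω, φ (c • f) = c * φ f) : φ 0 = 0 := by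
  have := hsmul 0 0 zero_mem_Bb
  simpa using this

lemma phi_mono (φ : (Ω → ℝ) → ℝ)
    (hadd : ∀ f ∈ Bb Ω, ∀ g ∈ Bb Ω, φ (f + g) = φ f + φ g)
    (hpos : ∀ f ∈ Bb Ω, (∀ ω, 0 ≤ f ω) → 0 ≤ φ f)
    {f g : Ω → ℝ} (hf : f ∈ Bb Ω) (hg : g ∈ Bb Ω) (h : ∀ ω, f ω ≤ g ω) : φ f ≤ φ g := by
  have hsub : g - f ∈ Bb Ω := sub_mem_Bb hg hf
  have h1 : φ (f + (g - f)) = φ f + φ (g - f) := hadd f hf _ hsub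
  have h2 : f + (g - f) = g := by ext ω; simp
  have h3 : 0 ≤ φ (g - f) := hpos _ hsub fun ω => by
    simp only [Pi.sub_apply, sub_nonneg]; exact h ω
  rw [h2] at h1
  linarith

lemma integrable_of_mem_Bb {f : Ω → ℝ} (hf : f ∈ Bb Ω) (μ : Measure Ω) [IsFiniteMeasure μ] :
    Integrable f μ := by
  obtain ⟨M, hM⟩ := hf.2
  exact Integrable.mono' (integrable_const M) hf.1.aestronglyMeasurable
    (ae_of_all _ fun ω => by simpa [Real.norm_eq_abs] using hM ω)

lemma phi_le_integral_Ub (φ : (Ω → ℝ) → ℝ)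
    (hadd : ∀ f ∈ Bb Ω, ∀ g ∈ Bb Ω, φ (f + g) = φ f + φ g)
    (hsmul : ∀ c : ℝ, ∀ f ∈ Bb Ω, φ (c • f) = c * φ f)
    (hpos : ∀ f ∈ Bb Ω, (∀ ω, 0 ≤ f ω) → 0 ≤ φ f)
    (μ : Measure Ω) [IsFiniteMeasure μ]
    (hrep : ∀ f ∈ Cb Ω, φ f = ∫ ω, f ω ∂μ) :
    ∀ f ∈ Ub Ω, φ f ≤ ∫ ω, f ω ∂μ := by
  intro f hf
  rcases isEmpty_or_nonempty Ω with hΩ | hΩ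
  · have hf0 : f = 0 := funext fun ω => (IsEmpty.false ω).elim
    subst hf0
    rw [phi_zero φ hsmul]
    simp
  · obtain ⟨M, hM⟩ := hf.2
    obtain ⟨G, hGc, hGM, hfG, hGt⟩ := usc_approx_seq hf.1 hM
    have hGCb : ∀ n, G n ∈ Cb Ω := fun n => ⟨hGc n, M, hGM n⟩
    have h1 : ∀ n, φ f ≤ ∫ ω, G n ω ∂μ := fun n =>
      (phi_mono φ hadd hpos (mem_Bb_of_Ub hf) (mem_Bb_of_Cb (hGCb n)) (hfG n)).trans_eq
        (hrep _ (hGCb n))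
    have h2 : Tendsto (fun n => ∫ ω, G n ω ∂μ) atTop (𝓝 (∫ ω, f ω ∂μ)) :=
      tendsto_integral_of_dominated_convergence (fun _ => M)
        (fun n => (hGc n).measurable.aestronglyMeasurable)
        (integrable_const M)
        (fun n => ae_of_all _ fun ω => by simpa [Real.norm_eq_abs] using hGM n ω)
        (ae_of_all _ hGt)
    exact ge_of_tendsto h2 (Eventually.of_forall h1)

/-- Corollary 1.7, second part (on a metric space): inequalities (9) for a positive linear
functional satisfying (C), equalities under coincidence of the conjugates, and the
representation (10) for lower regular φ. -/
theorem stmt13 (φ : (Ω → ℝ) → ℝ)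
    (hadd : ∀ f ∈ Bb Ω, ∀ g ∈ Bb Ω, φ (f + g) = φ f + φ g)
    (hsmul : ∀ c : ℝ, ∀ f ∈ Bb Ω, φ (c • f) = c * φ f)
    (hpos : ∀ f ∈ Bb Ω, (∀ ω, 0 ≤ f ω) → 0 ≤ φ f)
    (hC : CondCR φ)
    (μ : Measure Ω) (hμ : μ ∈ caReg Ω)
    (hrep : ∀ f ∈ Cb Ω, φ f = ∫ ω, f ω ∂μ) :
    (∀ f ∈ Ub Ω, φ f ≤ ∫ ω, f ω ∂μ) ∧
    (∀ f ∈ Bb Ω, lowerRegR φ f ≤ ∫ ω, f ω ∂μ) ∧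
    ((∀ ν ∈ caReg Ω, conjOnR (Cb Ω) φ ν = conjOnR (Ub Ω) φ ν) →
      (∀ f ∈ Ub Ω, φ f = ∫ ω, f ω ∂μ) ∧ (∀ f ∈ Bb Ω, lowerRegR φ f = ∫ ω, f ω ∂μ)) ∧
    ((∀ f ∈ Bb Ω, φ f = lowerRegR φ f) →
      (∀ ν ∈ caReg Ω, conjOnR (Cb Ω) φ ν = conjOnR (Ub Ω) φ ν) →
      ∀ f ∈ Bb Ω, φ f = ∫ ω, f ω ∂μ) := by
  haveI : IsFiniteMeasure μ := hμ.1
  have hUb : ∀ f ∈ Ub Ω, φ f ≤ ∫ ω, f ω ∂μ :=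
    phi_le_integral_Ub φ hadd hsmul hpos μ hrep
  have hbdd : ∀ f ∈ Bb Ω, ∀ x ∈ φ '' {g | g ∈ Ub Ω ∧ ∀ ω, g ω ≤ f ω}, x ≤ ∫ ω, f ω ∂μ := by
    rintro f hf x ⟨g, ⟨hg, hgle⟩, rfl⟩
    exact (hUb g hg).trans (integral_mono (integrable_of_mem_Bb (mem_Bb_of_Ub hg) μ)
      (integrable_of_mem_Bb hf μ) hgle)
  have hne : ∀ f ∈ Bb Ω, (φ '' {g | g ∈ Ub Ω ∧ ∀ ω, g ω ≤ f ω}).Nonempty := by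
    intro f hf
    obtain ⟨M, hM⟩ := hf.2
    exact ⟨φ (fun _ => -M), ⟨fun _ => -M, ⟨⟨upperSemicontinuous_const, |M|,
      fun _ => by simp⟩,
      fun ω => (abs_le.1 (hM ω)).1⟩, rfl⟩⟩
  have hBb : ∀ f ∈ Bb Ω, lowerRegR φ f ≤ ∫ ω, f ω ∂μ := fun f hf =>
    csSup_le (hne f hf) (hbdd f hf)
  have hmain : (∀ ν ∈ caReg Ω, conjOnR (Cb Ω) φ ν = conjOnR (Ub Ω) φ ν) →
      (∀ f ∈ Ub Ω, φ f = ∫ ω, f ω ∂μ) ∧ (∀ f ∈ Bb Ω, lowerRegR φ f = ∫ ω, f ω ∂μ) := by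
    intro hconj
    have hphi0 : φ 0 = 0 := phi_zero φ hsmul
    have hCb0 : conjOnR (Cb Ω) φ μ = 0 := by
      unfold conjOnR
      apply le_antisymm
      · refine iSup₂_le fun f hf => ?_
        rw [hrep f hf, ← EReal.coe_sub]
        simp
      · refine le_iSup₂_of_le 0 zero_mem_Cb ?_
        simp [hphi0]
    have hUbeq : ∀ f ∈ Ub Ω, φ f = ∫ ω, f ω ∂μ := by
      intro f hf
      refine le_antisymm (hUb f hf) ?_
      have h1 : ((∫ ω, f ω ∂μ : ℝ) : EReal) - ((φ f : ℝ) : EReal) ≤ conjOnR (Ub Ω) φ μ := by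
        unfold conjOnR
        exact le_iSup₂ (f := fun (g : Ω → ℝ) (_ : g ∈ Ub Ω) =>
          ((∫ ω, g ω ∂μ : ℝ) : EReal) - ((φ g : ℝ) : EReal)) f hf
      rw [← hconj μ hμ, hCb0, ← EReal.coe_sub] at h1
      have h2 : (∫ ω, f ω ∂μ) - φ f ≤ 0 := EReal.coe_nonpos.1 h1
      linarith
    refine ⟨hUbeq, fun f hf => le_antisymm (hBb f hf) ?_⟩
    obtain ⟨M, hM⟩ := hf.2
    have hintf : Integrable f μ := integrable_of_mem_Bb hf μ
    refine le_of_forall_sub_le fun ε hε => ?_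
    set fNN : Ω → ℝ≥0 := fun ω => Real.toNNReal (f ω + M) with hfNN
    have hcoe : ∀ ω, (fNN ω : ℝ) = f ω + M := fun ω =>
      Real.coe_toNNReal _ (by linarith [(abs_le.1 (hM ω)).1])
    have hfNNint : Integrable (fun ω => (fNN ω : ℝ)) μ := by
      have : (fun ω => (fNN ω : ℝ)) = fun ω => f ω + M := funext hcoe
      rw [this]
      exact hintf.add (integrable_const M)
    obtain ⟨g, hgle, hgusc, hgint, hgε⟩ :=
      exists_upperSemicontinuous_le_integral_le fNN hfNNint hε
    set h : Ω → ℝ := fun ω => (g ω : ℝ) - M with hh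
    have hgcoe_le : ∀ ω, (g ω : ℝ) ≤ f ω + M := fun ω => by
      rw [← hcoe ω]; exact_mod_cast hgle ω
    have hhusc : UpperSemicontinuous h := by
      have h1 : UpperSemicontinuous (fun ω => (g ω : ℝ)) :=
        Continuous.comp_upperSemicontinuous NNReal.continuous_coe hgusc NNReal.coe_mono
      have h2 := Continuous.comp_upperSemicontinuous
        (continuous_id.sub (continuous_const (y := M))) h1
        (fun a b hab => by simpa using sub_le_sub_right hab M)
      exact h2
    have hhabs : ∀ ω, |h ω| ≤ M := by
      intro ω
      rw [abs_le]
      have h0 : (0:ℝ) ≤ (g ω : ℝ) := (g ω).coe_nonneg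
      have h1 := hgcoe_le ω
      have h2 := (abs_le.1 (hM ω)).2
      constructor <;> simp only [hh] <;> linarith
    have hhUb : h ∈ Ub Ω := ⟨hhusc, M, hhabs⟩
    have hhle : ∀ ω, h ω ≤ f ω := fun ω => by
      have := hgcoe_le ω; simp only [hh]; linarith
    have hphih : φ h = ∫ ω, h ω ∂μ := hUbeq h hhUb
    have hmem : φ h ∈ φ '' {g | g ∈ Ub Ω ∧ ∀ ω, g ω ≤ f ω} := ⟨h, ⟨hhUb, hhle⟩, rfl⟩
    have hle2 : φ h ≤ lowerRegR φ f :=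
      le_csSup ⟨∫ ω, f ω ∂μ, fun x hx => hbdd f hf x hx⟩ hmem
    have hinth : ∫ ω, h ω ∂μ = (∫ ω, (g ω : ℝ) ∂μ) - (μ univ).toReal * M := by
      simp only [hh]
      rw [integral_sub hgint (integrable_const M), integral_const, smul_eq_mul]; rfl
    have hintfNN : ∫ ω, (fNN ω : ℝ) ∂μ = (∫ ω, f ω ∂μ) + (μ univ).toReal * M := by
      calc ∫ ω, (fNN ω : ℝ) ∂μ = ∫ ω, (f ω + M) ∂μ := integral_congr_ae (ae_of_all _ hcoe)
        _ = (∫ ω, f ω ∂μ) + (μ univ).toReal * M := by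
            rw [integral_add hintf (integrable_const M), integral_const, smul_eq_mul]; rfl
    have : (∫ ω, f ω ∂μ) - ε ≤ ∫ ω, h ω ∂μ := by
      rw [hinth]
      rw [hintfNN] at hgε
      linarith
    linarith
  refine ⟨hUb, hBb, hmain, fun hlow hconj f hf => ?_⟩
  rw [hlow f hf]
  exact (hmain hconj).2 f hf
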